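/- Let b ∈ ℝ and let F = F_{−1,b}. Define the exceptional set E ⊆ ℝ² as the union of: {(−(b+2)/5, (2b−1)/5)} if b > 1/2; {(−b, −1)} if b < 0; and the three-point set {((2−b)/5, −(2b+1)/5), ((b−2)/5, (2b+1)/5), ((−3b−4)/5, (4b−3)/5)} if 3/4 < b < 2 (each of these pieces being empty when the corresponding condition on b fails). Then for every (x, y) ∈ Q₂ ∪ Q₄ with (x, y) ∉ E there exists n ∈ ℕ such that F^n(x, y) ∈ Q₁ ∪ Q₃. -/
import Mathlib


/-- The piecewise linear map `F_{a,b}(x,y) = (|x| - y + a, x - |y| + b)`. -/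
noncomputable def F (a b : ℝ) : ℝ × ℝ → ℝ × ℝ :=
  fun p => (|p.1| - p.2 + a, p.1 - |p.2| + b)

/-- The closed first quadrant. -/
def Q1 : Set (ℝ × ℝ) := {p | 0 ≤ p.1 ∧ 0 ≤ p.2}

/-- The closed second quadrant. -/
def Q2 : Set (ℝ × ℝ) := {p | p.1 ≤ 0 ∧ 0 ≤ p.2}

/-- The closed third quadrant. -/
def Q3 : Set (ℝ × ℝ) := {p | p.1 ≤ 0 ∧ p.2 ≤ 0}

/-- The closed fourth quadrant. -/
def Q4 : Set (ℝ × ℝ) := {p | 0 ≤ p.1 ∧ p.2 ≤ 0}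

/-- The exceptional set of Proposition on `F_{-1,b}`: the fixed point in `Q₂`
(when `b > 1/2`), the fixed point in `Q₄` (when `b < 0`), and the 3-periodic orbit
in `Q₂ ∪ Q₄` (when `3/4 < b < 2`). -/
def ExceptionalSet (b : ℝ) : Set (ℝ × ℝ) :=
  {p | (1/2 < b ∧ p = (-(b+2)/5, (2*b-1)/5)) ∨
       (b < 0 ∧ p = (-b, -1)) ∨
       (3/4 < b ∧ b < 2 ∧
         (p = ((2-b)/5, -(2*b+1)/5) ∨ p = ((b-2)/5, (2*b+1)/5) ∨
          p = ((-3*b-4)/5, (4*b-3)/5)))}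

/-! ### Auxiliary material -/

/-- Open second quadrant (as a predicate). -/
abbrev OQ2 (p : ℝ × ℝ) : Prop := p.1 < 0 ∧ 0 < p.2

/-- Open fourth quadrant (as a predicate). -/
abbrev OQ4 (p : ℝ × ℝ) : Prop := 0 < p.1 ∧ p.2 < 0

lemma stepQ2 (b : ℝ) (p q : ℝ × ℝ) (h : OQ2 p) (e : q = F (-1) b p) :
    q.1 = -p.1 - p.2 - 1 ∧ q.2 = p.1 - p.2 + b := by
  subst e
  refine ⟨?_, ?_⟩ <;> simp [F, abs_of_neg h.1, abs_of_pos h.2] <;> ring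

lemma stepQ4 (b : ℝ) (p q : ℝ × ℝ) (h : OQ4 p) (e : q = F (-1) b p) :
    q.1 = p.1 - p.2 - 1 ∧ q.2 = p.1 + p.2 + b := by
  subst e
  refine ⟨?_, ?_⟩ <;> simp [F, abs_of_pos h.1, abs_of_neg h.2] <;> ring

/-- Key archimedean lemma: if `(-K)^k * u` is bounded below then `u = 0`. -/
lemma expKey (K c u : ℝ) (hK : 1 < K) (h : ∀ k : ℕ, c < (-K) ^ k * u) : u = 0 := by
  by_contra hu
  obtain ⟨k, hk⟩ := pow_unbounded_of_one_lt (|c| / |u|) hK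
  have hu0 : 0 < |u| := abs_pos.mpr hu
  have hck : |c| < K ^ k * |u| := by
    rw [div_lt_iff₀ hu0] at hk; linarith [hk]
  rcases lt_or_gt_of_ne hu with hneg | hpos
  · have he : (-K) ^ (2*k) * u = K ^ (2*k) * u := by
      rw [Even.neg_pow (even_two_mul k)]
    have hle : K ^ k ≤ K ^ (2*k) := pow_le_pow_right₀ (le_of_lt hK) (by omega)
    have h1 : K ^ (2*k) * u ≤ K ^ k * u :=
      mul_le_mul_of_nonpos_right hle (le_of_lt hneg)
    have h2 : K ^ k * |u| = -(K ^ k * u) := by rw [abs_of_neg hneg]; ring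
    have hc := h (2*k)
    rw [he] at hc
    linarith [neg_abs_le c]
  · have ho : (-K) ^ (2*k+1) * u = -(K ^ (2*k+1) * u) := by
      rw [Odd.neg_pow ⟨k, by ring⟩]; ring
    have hle : K ^ k ≤ K ^ (2*k+1) := pow_le_pow_right₀ (le_of_lt hK) (by omega)
    have h1 : K ^ k * u ≤ K ^ (2*k+1) * u :=
      mul_le_mul_of_nonneg_right hle (le_of_lt hpos)
    have h2 : K ^ k * |u| = K ^ k * u := by rw [abs_of_pos hpos]
    have hc := h (2*k+1)
    rw [ho] at hc
    linarith [neg_abs_le c]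

section Words

variable (b : ℝ) (z : ℕ → ℝ × ℝ) (hz : ∀ n, z (n+1) = F (-1) b (z n))

include hz

lemma no22 (hb : b ≤ 0) (n : ℕ) (h0 : OQ2 (z n)) (h1 : OQ2 (z (n+1))) : False := by
  obtain ⟨e1, e2⟩ := stepQ2 b (z n) (z (n+1)) h0 (hz n)
  obtain ⟨a0, a1⟩ := h0; obtain ⟨c0, c1⟩ := h1
  linarith

lemma no222 (hb : b ≤ 1/2) (n : ℕ) (h0 : OQ2 (z n)) (h1 : OQ2 (z (n+1)))
    (h2 : OQ2 (z (n+2))) : False := by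
  obtain ⟨e1, e2⟩ := stepQ2 b (z n) (z (n+1)) h0 (hz n)
  obtain ⟨f1, f2⟩ := stepQ2 b (z (n+1)) (z (n+2)) h1 (hz (n+1))
  obtain ⟨a0, a1⟩ := h0; obtain ⟨b0, b1⟩ := h1; obtain ⟨c0, c1⟩ := h2
  linarith

lemma no242 (hb : b ≤ 1/2) (n : ℕ) (h0 : OQ2 (z n)) (h1 : OQ4 (z (n+1)))
    (h2 : OQ2 (z (n+2))) : False := by
  obtain ⟨e1, e2⟩ := stepQ2 b (z n) (z (n+1)) h0 (hz n)
  obtain ⟨f1, f2⟩ := stepQ4 b (z (n+1)) (z (n+2)) h1 (hz (n+1))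
  obtain ⟨a0, a1⟩ := h0; obtain ⟨b0, b1⟩ := h1; obtain ⟨c0, c1⟩ := h2
  linarith

lemma no424 (n : ℕ) (h0 : OQ4 (z n)) (h1 : OQ2 (z (n+1)))
    (h2 : OQ4 (z (n+2))) : False := by
  obtain ⟨e1, e2⟩ := stepQ4 b (z n) (z (n+1)) h0 (hz n)
  obtain ⟨f1, f2⟩ := stepQ2 b (z (n+1)) (z (n+2)) h1 (hz (n+1))
  obtain ⟨a0, a1⟩ := h0; obtain ⟨b0, b1⟩ := h1; obtain ⟨c0, c1⟩ := h2
  linarith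

lemma no444 (hb : 1/2 ≤ b) (n : ℕ) (h0 : OQ4 (z n)) (h1 : OQ4 (z (n+1)))
    (h2 : OQ4 (z (n+2))) : False := by
  obtain ⟨e1, e2⟩ := stepQ4 b (z n) (z (n+1)) h0 (hz n)
  obtain ⟨f1, f2⟩ := stepQ4 b (z (n+1)) (z (n+2)) h1 (hz (n+1))
  obtain ⟨a0, a1⟩ := h0; obtain ⟨b0, b1⟩ := h1; obtain ⟨c0, c1⟩ := h2
  linarith

lemma no4222 (n : ℕ) (h0 : OQ4 (z n)) (h1 : OQ2 (z (n+1)))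
    (h2 : OQ2 (z (n+2))) (h3 : OQ2 (z (n+3))) : False := by
  obtain ⟨e1, e2⟩ := stepQ4 b (z n) (z (n+1)) h0 (hz n)
  obtain ⟨f1, f2⟩ := stepQ2 b (z (n+1)) (z (n+2)) h1 (hz (n+1))
  obtain ⟨g1, g2⟩ := stepQ2 b (z (n+2)) (z (n+3)) h2 (hz (n+2))
  obtain ⟨a0, a1⟩ := h0; obtain ⟨b0, b1⟩ := h1
  obtain ⟨c0, c1⟩ := h2; obtain ⟨d0, d1⟩ := h3
  linarith

lemma no44444 (hb : 0 < b) (n : ℕ) (h0 : OQ4 (z n)) (h1 : OQ4 (z (n+1)))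
    (h2 : OQ4 (z (n+2))) (h3 : OQ4 (z (n+3))) (h4 : OQ4 (z (n+4))) : False := by
  obtain ⟨e1, e2⟩ := stepQ4 b (z n) (z (n+1)) h0 (hz n)
  obtain ⟨f1, f2⟩ := stepQ4 b (z (n+1)) (z (n+2)) h1 (hz (n+1))
  obtain ⟨g1, g2⟩ := stepQ4 b (z (n+2)) (z (n+3)) h2 (hz (n+2))
  obtain ⟨i1, i2⟩ := stepQ4 b (z (n+3)) (z (n+4)) h3 (hz (n+3))
  obtain ⟨a0, a1⟩ := h0; obtain ⟨b0, b1⟩ := h1; obtain ⟨c0, c1⟩ := h2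
  obtain ⟨d0, d1⟩ := h3; obtain ⟨j0, j1⟩ := h4
  linarith

lemma no22444 (hb : 0 < b) (n : ℕ) (h0 : OQ2 (z n)) (h1 : OQ2 (z (n+1)))
    (h2 : OQ4 (z (n+2))) (h3 : OQ4 (z (n+3))) (h4 : OQ4 (z (n+4))) : False := by
  obtain ⟨e1, e2⟩ := stepQ2 b (z n) (z (n+1)) h0 (hz n)
  obtain ⟨f1, f2⟩ := stepQ2 b (z (n+1)) (z (n+2)) h1 (hz (n+1))
  obtain ⟨g1, g2⟩ := stepQ4 b (z (n+2)) (z (n+3)) h2 (hz (n+2))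
  obtain ⟨i1, i2⟩ := stepQ4 b (z (n+3)) (z (n+4)) h3 (hz (n+3))
  obtain ⟨a0, a1⟩ := h0; obtain ⟨b0, b1⟩ := h1; obtain ⟨c0, c1⟩ := h2
  obtain ⟨d0, d1⟩ := h3; obtain ⟨j0, j1⟩ := h4
  linarith

lemma no224422 (n : ℕ) (h0 : OQ2 (z n)) (h1 : OQ2 (z (n+1)))
    (h2 : OQ4 (z (n+2))) (h3 : OQ4 (z (n+3))) (h4 : OQ2 (z (n+4)))
    (h5 : OQ2 (z (n+5))) : False := by
  obtain ⟨e1, e2⟩ := stepQ2 b (z n) (z (n+1)) h0 (hz n)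
  obtain ⟨f1, f2⟩ := stepQ2 b (z (n+1)) (z (n+2)) h1 (hz (n+1))
  obtain ⟨g1, g2⟩ := stepQ4 b (z (n+2)) (z (n+3)) h2 (hz (n+2))
  obtain ⟨i1, i2⟩ := stepQ4 b (z (n+3)) (z (n+4)) h3 (hz (n+3))
  obtain ⟨k1, k2⟩ := stepQ2 b (z (n+4)) (z (n+5)) h4 (hz (n+4))
  obtain ⟨a0, a1⟩ := h0; obtain ⟨b0, b1⟩ := h1; obtain ⟨c0, c1⟩ := h2
  obtain ⟨d0, d1⟩ := h3; obtain ⟨j0, j1⟩ := h4; obtain ⟨l0, l1⟩ := h5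
  linarith

end Words

section Tails

variable (b : ℝ) (z : ℕ → ℝ × ℝ) (hz : ∀ n, z (n+1) = F (-1) b (z n))

include hz

/-- If the orbit stays forever in the open fourth quadrant from time `N` on,
then `z N` is the fixed point `(-b, -1)`. -/
lemma tail4 (N : ℕ) (hall : ∀ k, OQ4 (z (N + k))) : z N = (-b, -1) := by
  set w : ℕ → ℝ × ℝ := fun k => z (N + k) with hw
  have hwstep : ∀ j, w (j+1) = F (-1) b (w j) := fun j => hz (N + j)
  have hall' : ∀ k, OQ4 (w k) := hall
  have step := fun j => stepQ4 b (w j) (w (j+1)) (hall' j) (hwstep j)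
  have four : ∀ j, (w (j+4)).1 = -4*(w j).1 - 5*b ∧ (w (j+4)).2 = -4*(w j).2 - 5 := by
    intro j
    have s0 := step j
    have s1 := step (j+1)
    have s2 := step (j+2)
    have s3 := step (j+3)
    exact ⟨by linarith [s0.1, s0.2, s1.1, s1.2, s2.1, s2.2, s3.1, s3.2],
           by linarith [s0.1, s0.2, s1.1, s1.2, s2.1, s2.2, s3.1, s3.2]⟩
  have powx : ∀ k, (w (4*k)).1 + b = (-4:ℝ)^k * ((w 0).1 + b) := by
    intro k
    induction k with
    | zero => simp
    | succ k ih =>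
      have e : 4*(k+1) = 4*k+4 := by ring
      rw [e]
      have h4 := (four (4*k)).1
      linear_combination h4 - 4 * ih
  have powy : ∀ k, (w (4*k)).2 + 1 = (-4:ℝ)^k * ((w 0).2 + 1) := by
    intro k
    induction k with
    | zero => simp
    | succ k ih =>
      have e : 4*(k+1) = 4*k+4 := by ring
      rw [e]
      have h4 := (four (4*k)).2
      linear_combination h4 - 4 * ih
  have hx : (w 0).1 + b = 0 := by
    apply expKey 4 b _ (by norm_num)
    intro k
    have h0 := (hall' (4*k)).1
    have := powx k
    linarith
  have hy : -((w 0).2 + 1) = 0 := by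
    apply expKey 4 (-1) _ (by norm_num)
    intro k
    have h0 := (hall' (4*k)).2
    have hp := powy k
    have hr : (-4:ℝ)^k * (-((w 0).2 + 1)) = -((-4:ℝ)^k * ((w 0).2 + 1)) := by ring
    linarith
  have hz0 : z N = w 0 := rfl
  rw [hz0, Prod.ext_iff]
  constructor
  · show (w 0).1 = -b; linarith
  · show (w 0).2 = -1; linarith

/-- If the orbit stays forever in the open second quadrant from time `N` on,
then `z N` is the fixed point `(-(b+2)/5, (2b-1)/5)`. -/
lemma tail2 (N : ℕ) (hall : ∀ k, OQ2 (z (N + k))) :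
    z N = (-(b+2)/5, (2*b-1)/5) := by
  set w : ℕ → ℝ × ℝ := fun k => z (N + k) with hw
  have hwstep : ∀ j, w (j+1) = F (-1) b (w j) := fun j => hz (N + j)
  have hall' : ∀ k, OQ2 (w k) := hall
  have step := fun j => stepQ2 b (w j) (w (j+1)) (hall' j) (hwstep j)
  have four : ∀ j, (w (j+4)).1 = -4*(w j).1 - b - 2 ∧ (w (j+4)).2 = -4*(w j).2 + 2*b - 1 := by
    intro j
    have s0 := step j
    have s1 := step (j+1)
    have s2 := step (j+2)
    have s3 := step (j+3)
    exact ⟨by linarith [s0.1, s0.2, s1.1, s1.2, s2.1, s2.2, s3.1, s3.2],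
           by linarith [s0.1, s0.2, s1.1, s1.2, s2.1, s2.2, s3.1, s3.2]⟩
  have powx : ∀ k, (w (4*k)).1 + (b+2)/5 = (-4:ℝ)^k * ((w 0).1 + (b+2)/5) := by
    intro k
    induction k with
    | zero => simp
    | succ k ih =>
      have e : 4*(k+1) = 4*k+4 := by ring
      rw [e]
      have h4 := (four (4*k)).1
      linear_combination h4 - 4 * ih
  have powy : ∀ k, (w (4*k)).2 - (2*b-1)/5 = (-4:ℝ)^k * ((w 0).2 - (2*b-1)/5) := by
    intro k
    induction k with
    | zero => simp
    | succ k ih =>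
      have e : 4*(k+1) = 4*k+4 := by ring
      rw [e]
      have h4 := (four (4*k)).2
      linear_combination h4 - 4 * ih
  have hx : -((w 0).1 + (b+2)/5) = 0 := by
    apply expKey 4 (-(b+2)/5) _ (by norm_num)
    intro k
    have h0 := (hall' (4*k)).1
    have hp := powx k
    have hr : (-4:ℝ)^k * (-((w 0).1 + (b+2)/5)) = -((-4:ℝ)^k * ((w 0).1 + (b+2)/5)) := by
      ring
    linarith
  have hy : (w 0).2 - (2*b-1)/5 = 0 := by
    apply expKey 4 (-(2*b-1)/5) _ (by norm_num)
    intro k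
    have h0 := (hall' (4*k)).2
    have hp := powy k
    linarith
  have hz0 : z N = w 0 := rfl
  rw [hz0, Prod.ext_iff]
  constructor
  · show (w 0).1 = -(b+2)/5; linarith
  · show (w 0).2 = (2*b-1)/5; linarith

/-- If the orbit follows the period-3 pattern `Q4, Q2, Q2` forever from time `N` on,
then `z N` is the periodic point `((2-b)/5, -(2b+1)/5)`. -/
lemma tail422 (N : ℕ)
    (hall : ∀ k, OQ4 (z (N + 3*k)) ∧ OQ2 (z (N + (3*k+1))) ∧ OQ2 (z (N + (3*k+2)))) :
    z N = ((2-b)/5, -(2*b+1)/5) := by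
  set w : ℕ → ℝ × ℝ := fun k => z (N + k) with hw
  have hwstep : ∀ j, w (j+1) = F (-1) b (w j) := fun j => hz (N + j)
  have hall' : ∀ k, OQ4 (w (3*k)) ∧ OQ2 (w (3*k+1)) ∧ OQ2 (w (3*k+2)) := hall
  have three : ∀ k, (w (3*k+3)).1 = 2*(w (3*k)).1 + 2*(w (3*k)).2 + b ∧
      (w (3*k+3)).2 = -2*(w (3*k)).1 + 2*(w (3*k)).2 + 1 := by
    intro k
    obtain ⟨m0, m1, m2⟩ := hall' k
    have s0 := stepQ4 b (w (3*k)) (w (3*k+1)) m0 (hwstep (3*k))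
    have s1 := stepQ2 b (w (3*k+1)) (w (3*k+2)) m1 (hwstep (3*k+1))
    have s2 := stepQ2 b (w (3*k+2)) (w (3*k+3)) m2 (hwstep (3*k+2))
    exact ⟨by linarith [s0.1, s0.2, s1.1, s1.2, s2.1, s2.2],
           by linarith [s0.1, s0.2, s1.1, s1.2, s2.1, s2.2]⟩
  have twelve : ∀ k, (w (12*k+12)).1 = -64*(w (12*k)).1 + 26 - 13*b ∧
      (w (12*k+12)).2 = -64*(w (12*k)).2 - 26*b - 13 := by
    intro k
    have t0 := three (4*k)
    have t1 := three (4*k+1)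
    have t2 := three (4*k+2)
    have t3 := three (4*k+3)
    have e0 : 3*(4*k) = 12*k := by ring
    have e0' : 3*(4*k)+3 = 12*k+3 := by ring
    have e1 : 3*(4*k+1) = 12*k+3 := by ring
    have e1' : 3*(4*k+1)+3 = 12*k+6 := by ring
    have e2 : 3*(4*k+2) = 12*k+6 := by ring
    have e2' : 3*(4*k+2)+3 = 12*k+9 := by ring
    have e3 : 3*(4*k+3) = 12*k+9 := by ring
    have e3' : 3*(4*k+3)+3 = 12*k+12 := by ring
    rw [e0'] at t0; rw [e0] at t0
    rw [e1'] at t1; rw [e1] at t1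
    rw [e2'] at t2; rw [e2] at t2
    rw [e3'] at t3; rw [e3] at t3
    exact ⟨by linarith [t0.1, t0.2, t1.1, t1.2, t2.1, t2.2, t3.1, t3.2],
           by linarith [t0.1, t0.2, t1.1, t1.2, t2.1, t2.2, t3.1, t3.2]⟩
  have powx : ∀ k, (w (12*k)).1 - (2-b)/5 = (-64:ℝ)^k * ((w 0).1 - (2-b)/5) := by
    intro k
    induction k with
    | zero => simp
    | succ k ih =>
      have e : 12*(k+1) = 12*k+12 := by ring
      rw [e]
      have h4 := (twelve k).1
      linear_combination h4 - 64 * ih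
  have powy : ∀ k, (w (12*k)).2 + (2*b+1)/5 = (-64:ℝ)^k * ((w 0).2 + (2*b+1)/5) := by
    intro k
    induction k with
    | zero => simp
    | succ k ih =>
      have e : 12*(k+1) = 12*k+12 := by ring
      rw [e]
      have h4 := (twelve k).2
      linear_combination h4 - 64 * ih
  have hmem : ∀ k, OQ4 (w (12*k)) := by
    intro k
    have := (hall' (4*k)).1
    have e : 3*(4*k) = 12*k := by ring
    rwa [e] at this
  have hx : (w 0).1 - (2-b)/5 = 0 := by
    apply expKey 64 (-(2-b)/5) _ (by norm_num)
    intro k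
    have h0 := (hmem k).1
    have hp := powx k
    linarith
  have hy : -((w 0).2 + (2*b+1)/5) = 0 := by
    apply expKey 64 (-(2*b+1)/5) _ (by norm_num)
    intro k
    have h0 := (hmem k).2
    have hp := powy k
    have hr : (-64:ℝ)^k * (-((w 0).2 + (2*b+1)/5)) = -((-64:ℝ)^k * ((w 0).2 + (2*b+1)/5)) := by
      ring
    linarith
  have hz0 : z N = w 0 := rfl
  rw [hz0, Prod.ext_iff]
  constructor
  · show (w 0).1 = (2-b)/5; linarith
  · show (w 0).2 = -(2*b+1)/5; linarith

end Tails

/-- Backward step: a point of the open second/fourth quadrants mapping into the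
exceptional set is itself exceptional. -/
lemma backStep (b : ℝ) (p : ℝ × ℝ) (hp : OQ2 p ∨ OQ4 p)
    (h : F (-1) b p ∈ ExceptionalSet b) : p ∈ ExceptionalSet b := by
  simp only [ExceptionalSet, Set.mem_setOf_eq] at h ⊢
  rcases h with ⟨hb, hpt⟩ | ⟨hb, hpt⟩ | ⟨hb1, hb2, hpt | hpt | hpt⟩
  · -- F p = p₂, fixed point of Q2 branch, b > 1/2
    rcases hp with h2 | h4
    · obtain ⟨e1, e2⟩ := stepQ2 b p (F (-1) b p) h2 rfl
      rw [hpt] at e1 e2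
      norm_num at e1 e2
      left
      refine ⟨hb, Prod.ext ?_ ?_⟩ <;> simp <;> linarith
    · obtain ⟨e1, e2⟩ := stepQ4 b p (F (-1) b p) h4 rfl
      rw [hpt] at e1 e2
      norm_num at e1 e2
      exact absurd h4.1 (by linarith)
  · -- F p = p₄ = (-b,-1), b < 0
    rcases hp with h2 | h4
    · obtain ⟨e1, e2⟩ := stepQ2 b p (F (-1) b p) h2 rfl
      rw [hpt] at e1 e2
      norm_num at e1 e2
      exact absurd h2.2 (by linarith)
    · obtain ⟨e1, e2⟩ := stepQ4 b p (F (-1) b p) h4 rfl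
      rw [hpt] at e1 e2
      norm_num at e1 e2
      right; left
      refine ⟨hb, Prod.ext ?_ ?_⟩ <;> simp <;> linarith
  · -- F p = q₄ = ((2-b)/5, -(2b+1)/5)
    rcases hp with h2 | h4
    · obtain ⟨e1, e2⟩ := stepQ2 b p (F (-1) b p) h2 rfl
      rw [hpt] at e1 e2
      norm_num at e1 e2
      right; right
      exact ⟨hb1, hb2, Or.inr (Or.inr (Prod.ext (by simp; linarith) (by simp; linarith)))⟩
    · obtain ⟨e1, e2⟩ := stepQ4 b p (F (-1) b p) h4 rfl
      rw [hpt] at e1 e2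
      norm_num at e1 e2
      exact absurd h4.1 (by linarith)
  · -- F p = q₂ₐ = ((b-2)/5, (2b+1)/5)
    rcases hp with h2 | h4
    · obtain ⟨e1, e2⟩ := stepQ2 b p (F (-1) b p) h2 rfl
      rw [hpt] at e1 e2
      norm_num at e1 e2
      exact absurd h2.2 (by linarith)
    · obtain ⟨e1, e2⟩ := stepQ4 b p (F (-1) b p) h4 rfl
      rw [hpt] at e1 e2
      norm_num at e1 e2
      right; right
      exact ⟨hb1, hb2, Or.inl (Prod.ext (by simp; linarith) (by simp; linarith))⟩
  · -- F p = q₂ᵦ = ((-3b-4)/5, (4b-3)/5)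
    rcases hp with h2 | h4
    · obtain ⟨e1, e2⟩ := stepQ2 b p (F (-1) b p) h2 rfl
      rw [hpt] at e1 e2
      norm_num at e1 e2
      right; right
      exact ⟨hb1, hb2, Or.inr (Or.inl (Prod.ext (by simp; linarith) (by simp; linarith)))⟩
    · obtain ⟨e1, e2⟩ := stepQ4 b p (F (-1) b p) h4 rfl
      rw [hpt] at e1 e2
      norm_num at e1 e2
      exact absurd h4.1 (by linarith)

/-- Backward induction along the orbit. -/
lemma backOrbit (b : ℝ) (z : ℕ → ℝ × ℝ) (hz : ∀ n, z (n+1) = F (-1) b (z n))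
    (hQ : ∀ n, OQ2 (z n) ∨ OQ4 (z n)) (N : ℕ) (hN : z N ∈ ExceptionalSet b) :
    z 0 ∈ ExceptionalSet b := by
  induction N with
  | zero => exact hN
  | succ n ih =>
    rw [hz n] at hN
    exact ih (backStep b (z n) (hQ n) hN)

/-- For `F = F_{-1,b}`, the orbit of every point of `Q₂ ∪ Q₄` outside the
exceptional set meets `Q₁ ∪ Q₃`. -/
theorem orbit_meets_Q1_union_Q3 (b : ℝ) (x : ℝ × ℝ) (hx : x ∈ Q2 ∪ Q4)
    (hE : x ∉ ExceptionalSet b) :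
    ∃ n : ℕ, (F (-1) b)^[n] x ∈ Q1 ∪ Q3 := by
  by_contra hcon
  push_neg at hcon
  set z : ℕ → ℝ × ℝ := fun n => (F (-1) b)^[n] x with hzdef
  have hz : ∀ n, z (n+1) = F (-1) b (z n) := fun n =>
    Function.iterate_succ_apply' (F (-1) b) n x
  have hQ : ∀ n, OQ2 (z n) ∨ OQ4 (z n) := by
    intro n
    have hn := hcon n
    simp only [Q1, Q3, Set.mem_union, Set.mem_setOf_eq] at hn
    push_neg at hn
    rcases lt_trichotomy (z n).1 0 with h | h | h
    · left
      exact ⟨h, hn.2 (le_of_lt h)⟩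
    · exact absurd (hn.2 (le_of_eq h)) (not_lt.mpr (le_of_lt (hn.1 (le_of_eq h.symm))))
    · right
      exact ⟨h, hn.1 (le_of_lt h)⟩
  have hz0 : z 0 = x := rfl
  -- three regimes for b
  rcases le_or_gt b 0 with hb0 | hb0
  · -- b ≤ 0 : the tail must be 4^∞
    have h4 : ∀ n, OQ4 (z (n+1)) := by
      intro n
      rcases hQ (n+1) with h2 | h4
      · exfalso
        have h2' : OQ4 (z (n+2)) := by
          rcases hQ (n+2) with h2'' | h4'
          · exact absurd (no22 b z hz hb0 (n+1) h2 h2'') id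
          · exact h4'
        have hprev : OQ4 (z n) := by
          rcases hQ n with h2'' | h4'
          · exact absurd (no22 b z hz hb0 n h2'' h2) id
          · exact h4'
        exact no424 b z hz n hprev h2 h2'
      · exact h4
    have hall : ∀ k, OQ4 (z (1 + k)) := by
      intro k
      have e : 1 + k = k + 1 := by omega
      rw [e]; exact h4 k
    have h1 := tail4 b z hz 1 hall
    have hbneg : b < 0 := by
      have := (h4 0).1
      rw [h1] at this
      norm_num at this
      linarith
    have hmem : z 1 ∈ ExceptionalSet b := by
      simp only [ExceptionalSet, Set.mem_setOf_eq]
      exact Or.inr (Or.inl ⟨hbneg, h1⟩)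
    exact hE (hz0 ▸ backOrbit b z hz hQ 1 hmem)
  · rcases le_or_gt b (1/2) with hb1 | hb1
    · -- 0 < b ≤ 1/2 : always escapes; derive a contradiction
      -- first find an index k₀ with OQ4 (z k₀)
      have hex4 : ∃ k, OQ4 (z k) := by
        rcases hQ 0 with h0 | h0
        · rcases hQ 1 with h1 | h1
          · rcases hQ 2 with h2 | h2
            · exact absurd (no222 b z hz hb1 0 h0 h1 h2) id
            · exact ⟨2, h2⟩
          · exact ⟨1, h1⟩
        · exact ⟨0, h0⟩
      obtain ⟨k0, hk0⟩ := hex4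
      -- find n ≥ k₀ with OQ4 (z n) ∧ OQ2 (z (n+1))
      have hex42 : ∃ n, OQ4 (z n) ∧ OQ2 (z (n+1)) := by
        rcases hQ (k0+1) with h1 | h1
        · exact ⟨k0, hk0, h1⟩
        · rcases hQ (k0+2) with h2 | h2
          · exact ⟨k0+1, h1, h2⟩
          · rcases hQ (k0+3) with h3 | h3
            · exact ⟨k0+2, h2, h3⟩
            · rcases hQ (k0+4) with h4 | h4
              · exact ⟨k0+3, h3, h4⟩
              · exact absurd (no44444 b z hz hb0 k0 hk0 h1 h2 h3 h4) id
      obtain ⟨n, hn4, hn2⟩ := hex42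
      -- forced continuation leads to contradiction
      have h2 : OQ2 (z (n+2)) := by
        rcases hQ (n+2) with h | h
        · exact h
        · exact absurd (no424 b z hz n hn4 hn2 h) id
      have h3 : OQ4 (z (n+3)) := by
        rcases hQ (n+3) with h | h
        · exact absurd (no222 b z hz hb1 (n+1) hn2 h2 h) id
        · exact h
      have h4 : OQ4 (z (n+4)) := by
        rcases hQ (n+4) with h | h
        · exact absurd (no242 b z hz hb1 (n+2) h2 h3 h) id
        · exact h
      have h5 : OQ2 (z (n+5)) := by
        rcases hQ (n+5) with h | h
        · exact h
        · exact absurd (no22444 b z hz hb0 (n+1) hn2 h2 h3 h4 h) id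
      rcases hQ (n+6) with h | h
      · exact no224422 b z hz (n+1) hn2 h2 h3 h4 h5 h
      · exact no424 b z hz (n+4) h4 h5 h
    · -- 1/2 < b
      by_cases hinf : ∀ N, ∃ k, OQ4 (z (N + k))
      · -- infinitely many visits to Q4 : the tail is the 3-cycle
        obtain ⟨m0, hm0⟩ := hinf 0
        have hm : OQ4 (z m0) := by
          have e : 0 + m0 = m0 := by omega
          rwa [e] at hm0
        -- find n₁ with OQ2 (z n₁), OQ2 (z (n₁+1)), OQ4 (z (n₁+2))
        have hpat : ∃ n1, OQ2 (z n1) ∧ OQ2 (z (n1+1)) ∧ OQ4 (z (n1+2)) := by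
          rcases hQ (m0+1) with h1 | h1
          · rcases hQ (m0+2) with h2 | h2
            · rcases hQ (m0+3) with h3 | h3
              · exact absurd (no4222 b z hz m0 hm h1 h2 h3) id
              · exact ⟨m0+1, h1, h2, h3⟩
            · exact absurd (no424 b z hz m0 hm h1 h2) id
          · rcases hQ (m0+2) with h2 | h2
            · rcases hQ (m0+3) with h3 | h3
              · rcases hQ (m0+4) with h4 | h4
                · exact absurd (no4222 b z hz (m0+1) h1 h2 h3 h4) id
                · exact ⟨m0+2, h2, h3, h4⟩
              · exact absurd (no424 b z hz (m0+1) h1 h2 h3) id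
            · exact absurd (no444 b z hz (le_of_lt hb1) m0 hm h1 h2) id
        obtain ⟨n1, hp0, hp1, hp2⟩ := hpat
        -- the pattern 2,2,4 repeats forever with period 3
        have pat : ∀ k, OQ2 (z (n1 + 3*k)) ∧ OQ2 (z (n1 + 3*k + 1)) ∧ OQ4 (z (n1 + 3*k + 2)) := by
          intro k
          induction k with
          | zero =>
            constructor
            · have e : n1 + 3*0 = n1 := by omega
              rwa [e]
            constructor
            · have e : n1 + 3*0 + 1 = n1 + 1 := by omega
              rwa [e]
            · have e : n1 + 3*0 + 2 = n1 + 2 := by omega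
              rwa [e]
          | succ k ih =>
            obtain ⟨a2, b2, c4⟩ := ih
            have hA : OQ2 (z (n1 + 3*k + 3)) := by
              rcases hQ (n1 + 3*k + 3) with h | h
              · exact h
              · exfalso
                have hB : OQ2 (z (n1 + 3*k + 4)) := by
                  rcases hQ (n1 + 3*k + 4) with h' | h'
                  · exact h'
                  · exact absurd (no444 b z hz (le_of_lt hb1) (n1+3*k+2) c4 h h') id
                have hC : OQ2 (z (n1 + 3*k + 5)) := by
                  rcases hQ (n1 + 3*k + 5) with h' | h'
                  · exact h'
                  · exact absurd (no424 b z hz (n1+3*k+3) h hB h') id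
                exact no224422 b z hz (n1+3*k) a2 b2 c4 h hB hC
            have hB : OQ2 (z (n1 + 3*k + 4)) := by
              rcases hQ (n1 + 3*k + 4) with h | h
              · exact h
              · exact absurd (no424 b z hz (n1+3*k+2) c4 hA h) id
            have hC : OQ4 (z (n1 + 3*k + 5)) := by
              rcases hQ (n1 + 3*k + 5) with h | h
              · exact absurd (no4222 b z hz (n1+3*k+2) c4 hA hB h) id
              · exact h
            refine ⟨?_, ?_, ?_⟩
            · have e : n1 + 3*(k+1) = n1 + 3*k + 3 := by omega
              rwa [e]
            · have e : n1 + 3*(k+1) + 1 = n1 + 3*k + 4 := by omega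
              rwa [e]
            · have e : n1 + 3*(k+1) + 2 = n1 + 3*k + 5 := by omega
              rwa [e]
        -- apply the 3-cycle expansion at N = n1 + 2
        have hall : ∀ k, OQ4 (z ((n1+2) + 3*k)) ∧ OQ2 (z ((n1+2) + (3*k+1))) ∧
            OQ2 (z ((n1+2) + (3*k+2))) := by
          intro k
          refine ⟨?_, ?_, ?_⟩
          · have e : (n1+2) + 3*k = n1 + 3*k + 2 := by omega
            rw [e]; exact (pat k).2.2
          · have e : (n1+2) + (3*k+1) = n1 + 3*(k+1) := by omega
            rw [e]; exact (pat (k+1)).1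
          · have e : (n1+2) + (3*k+2) = n1 + 3*(k+1) + 1 := by omega
            rw [e]; exact (pat (k+1)).2.1
        have hN := tail422 b z hz (n1+2) hall
        set N := n1 + 2 with hNdef
        -- b < 2 from the first coordinate of z N being positive
        have hq4 : OQ4 (z N) := by
          have := (hall 0).1
          have e : N + 3*0 = N := by omega
          rwa [e] at this
        have hblt2 : b < 2 := by
          have := hq4.1
          rw [hN] at this
          norm_num at this
          linarith
        -- compute z (N+1) and z (N+2) to get b > 3/4
        have s1 := stepQ4 b (z N) (z (N+1)) hq4 (hz N)
        have hq2 : OQ2 (z (N+1)) := by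
          have := (hall 0).2.1
          have e : N + (3*0+1) = N + 1 := by omega
          rwa [e] at this
        have s2 := stepQ2 b (z (N+1)) (z (N+2)) hq2 (hz (N+1))
        have hq2' : OQ2 (z (N+2)) := by
          have := (hall 0).2.2
          have e : N + (3*0+2) = N + 2 := by omega
          rwa [e] at this
        have hb34 : 3/4 < b := by
          have hx1 : (z N).1 = (2-b)/5 := by rw [hN]
          have hy1 : (z N).2 = -(2*b+1)/5 := by rw [hN]
          have := hq2'.2
          linarith [s1.1, s1.2, s2.1, s2.2]
        have hmem : z N ∈ ExceptionalSet b := by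
          simp only [ExceptionalSet, Set.mem_setOf_eq]
          exact Or.inr (Or.inr ⟨hb34, hblt2, Or.inl hN⟩)
        exact hE (hz0 ▸ backOrbit b z hz hQ N hmem)
      · -- finitely many visits to Q4 : tail 2^∞
        push_neg at hinf
        obtain ⟨N, hNall⟩ := hinf
        have hall : ∀ k, OQ2 (z (N + k)) := by
          intro k
          rcases hQ (N + k) with h | h
          · exact h
          · exact absurd h (hNall k)
        have hN := tail2 b z hz N hall
        have hmem : z N ∈ ExceptionalSet b := by
          simp only [ExceptionalSet, Set.mem_setOf_eq]
          exact Or.inl ⟨hb1, hN⟩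
        exact hE (hz0 ▸ backOrbit b z hz hQ N hmem)
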